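/- Let ℓ ≤ n, let O be a self-adjoint operator on ℂ^{{0,1}^ℓ} with 0 ≤ O ≤ I, and for each w let O^{(w)} = P^{(w)}_ℓ O P^{(w)}_ℓ (a positive semidefinite operator), with √(O^{(w)}) its positive semidefinite square root. Then for every vector ψ ∈ ℂ^{{0,1}^n} of weight k, ‖ ∑_{w=0}^{min(k,ℓ)} (√(O^{(w)}) ⊗ P^{(k−w)}_{n−ℓ}) ψ ‖² = ⟨ψ, (O ⊗ I) ψ⟩, under the identification of ℂ^{{0,1}^n} with ℂ^{{0,1}^ℓ} ⊗ ℂ^{{0,1}^{n−ℓ}} via e_{xy} ↦ e_x ⊗ e_y. -/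

import Mathlib

open Matrix Kronecker ComplexOrder

/-- Hamming weight of a bit string. -/
def wt {n : ℕ} (x : Fin n → Bool) : ℕ :=
  (Finset.univ.filter fun i => x i = true).card

/-- The weight-`k` projector `P^{(k)}_n` on `n` qubits. -/
noncomputable def Pk (n k : ℕ) : Matrix (Fin n → Bool) (Fin n → Bool) ℂ :=
  Matrix.diagonal fun x => if wt x = k then 1 else 0

/-- The identification `ℂ^{{0,1}^ℓ} ⊗ ℂ^{{0,1}^m} ≅ ℂ^{{0,1}^{ℓ+m}}`. -/
def splitEquiv (l m : ℕ) : ((Fin l → Bool) × (Fin m → Bool)) ≃ (Fin (l + m) → Bool) :=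
  (Equiv.sumArrowEquivProdArrow (Fin l) (Fin m) Bool).symm.trans
    (Equiv.arrowCongr finSumFinEquiv (Equiv.refl Bool))

/-- The identification `ℂ^{{0,1}^ℓ} ⊗ ℂ^{{0,1}^{n-ℓ}} ≅ ℂ^{{0,1}^n}` for `ℓ ≤ n`. -/
def splitEquivLe {l n : ℕ} (h : l ≤ n) :
    ((Fin l → Bool) × (Fin (n - l) → Bool)) ≃ (Fin n → Bool) :=
  (splitEquiv l (n - l)).trans
    (Equiv.arrowCongr (finCongr (Nat.add_sub_cancel' h)) (Equiv.refl Bool))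

/-- The square root of a positive semidefinite matrix, as `Matrix.PosSemidef.sqrt` was defined in
Mathlib (December 2024); it has since been removed from Mathlib. -/
noncomputable def Matrix.PosSemidef.sqrt {n 𝕜 : Type*} [Fintype n] [DecidableEq n] [RCLike 𝕜]
    {A : Matrix n n 𝕜} (hA : A.PosSemidef) : Matrix n n 𝕜 :=
  hA.1.eigenvectorUnitary.1 * diagonal ((↑) ∘ (√·) ∘ hA.1.eigenvalues) *
    (star hA.1.eigenvectorUnitary : Matrix n n 𝕜)

-- helpers
lemma psd_sqrt_isHermitian {I : Type*} [Fintype I] [DecidableEq I] {A : Matrix I I ℂ}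
    (hA : A.PosSemidef) : hA.sqrt.IsHermitian := by
  unfold Matrix.PosSemidef.sqrt IsHermitian
  rw [conjTranspose_mul, conjTranspose_mul, star_eq_conjTranspose, conjTranspose_conjTranspose,
    diagonal_conjTranspose, Matrix.mul_assoc]
  congr 3
  ext i
  simp

lemma psd_sqrt_mul_self {I : Type*} [Fintype I] [DecidableEq I] {A : Matrix I I ℂ}
    (hA : A.PosSemidef) : hA.sqrt * hA.sqrt = A := by
  conv_rhs => rw [hA.1.spectral_theorem, Unitary.conjStarAlgAut_apply]
  unfold Matrix.PosSemidef.sqrt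
  have hU : (star hA.1.eigenvectorUnitary : Matrix I I ℂ) * hA.1.eigenvectorUnitary = 1 :=
    Unitary.coe_star_mul_self _
  simp only [Matrix.mul_assoc]
  rw [← Matrix.mul_assoc (star hA.1.eigenvectorUnitary : Matrix I I ℂ), hU, Matrix.one_mul,
    ← Matrix.mul_assoc (diagonal _), diagonal_mul_diagonal]
  congr 3
  ext i
  simp only [Function.comp_apply]
  rw [← RCLike.ofReal_mul, Real.mul_self_sqrt (hA.eigenvalues_nonneg i)]

lemma wt_eq_sum {n : ℕ} (x : Fin n → Bool) :
    wt x = ∑ i, if x i = true then 1 else 0 := Finset.card_filter _ _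

lemma wt_comp_equiv {m n : ℕ} (e : Fin m ≃ Fin n) (x : Fin n → Bool) :
    wt (x ∘ e) = wt x := by
  unfold wt
  exact Finset.card_equiv e (by simp)

lemma splitEquiv_apply {l m : ℕ} (x : Fin l → Bool) (y : Fin m → Bool) (i : Fin (l + m)) :
    splitEquiv l m (x, y) i = Sum.elim x y (finSumFinEquiv.symm i) := rfl

lemma wt_splitEquiv {l m : ℕ} (x : Fin l → Bool) (y : Fin m → Bool) :
    wt (splitEquiv l m (x, y)) = wt x + wt y := by
  rw [wt_eq_sum, ← Equiv.sum_comp finSumFinEquiv, Fintype.sum_sum_type]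
  simp only [splitEquiv_apply, Equiv.symm_apply_apply]
  rw [wt_eq_sum x, wt_eq_sum y]
  simp only [Sum.elim_inl, Sum.elim_inr]
  congr!

lemma wt_splitEquivLe {l n : ℕ} (h : l ≤ n) (x : Fin l → Bool) (y : Fin (n - l) → Bool) :
    wt (splitEquivLe h (x, y)) = wt x + wt y := by
  have : splitEquivLe h (x, y) = (splitEquiv l (n - l) (x, y)) ∘ (finCongr (Nat.add_sub_cancel' h)).symm := rfl
  rw [this, wt_comp_equiv, wt_splitEquiv]

lemma Pk_herm (m k : ℕ) : (Pk m k)ᴴ = Pk m k := by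
  unfold Pk
  rw [Matrix.diagonal_conjTranspose]
  have : (star fun x : Fin m → Bool => if wt x = k then (1:ℂ) else 0)
      = fun x => if wt x = k then (1:ℂ) else 0 := by
    funext x; by_cases hx : wt x = k <;> simp [hx]
  rw [this]

lemma Pk_mul_Pk (m a b : ℕ) : Pk m a * Pk m b = if a = b then Pk m a else 0 := by
  unfold Pk
  rw [Matrix.diagonal_mul_diagonal]
  split_ifs with h
  · subst h
    have : (fun x : Fin m → Bool => (if wt x = a then (1:ℂ) else 0) * (if wt x = a then 1 else 0))
        = fun x => if wt x = a then (1:ℂ) else 0 := by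
      funext x; by_cases hx : wt x = a <;> simp [hx]
    rw [this]
  · have : (fun x : Fin m → Bool => (if wt x = a then (1:ℂ) else 0) * (if wt x = b then 1 else 0))
        = fun _ => (0:ℂ) := by
      funext x
      by_cases hx : wt x = a
      · simp [hx, h]
      · simp [hx]
    rw [this, Matrix.diagonal_zero]

lemma kron_conjT {I J : Type*} (A : Matrix I I ℂ) (B : Matrix J J ℂ) :
    (A ⊗ₖ B)ᴴ = Aᴴ ⊗ₖ Bᴴ := by
  ext ⟨i, j⟩ ⟨i', j'⟩
  simp [Matrix.conjTranspose_apply, Matrix.kroneckerMap_apply, star_mul', mul_comm]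

lemma sum_mulVec' {ι I : Type*} [Fintype I] [DecidableEq I] (s : Finset ι)
    (A : ι → Matrix I I ℂ) (v : I → ℂ) :
    (∑ i ∈ s, A i) *ᵥ v = ∑ i ∈ s, A i *ᵥ v := by
  funext x
  simp only [Matrix.mulVec, dotProduct, Finset.sum_apply, Matrix.sum_apply,
    Finset.sum_mul]
  rw [Finset.sum_comm]

lemma reindex_mul {I J : Type*} [Fintype I] [Fintype J] [DecidableEq I] [DecidableEq J]
    (e : I ≃ J) (A B : Matrix I I ℂ) :
    Matrix.reindex e e A * Matrix.reindex e e B = Matrix.reindex e e (A * B) := by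
  simp only [Matrix.reindex_apply]
  exact Matrix.submatrix_mul_equiv A B _ _ _

lemma reindex_conjT {I J : Type*} (e : I ≃ J) (A : Matrix I I ℂ) :
    (Matrix.reindex e e A)ᴴ = Matrix.reindex e e Aᴴ := by
  simp [Matrix.reindex_apply, Matrix.conjTranspose_submatrix]


lemma wt_le {n : ℕ} (x : Fin n → Bool) : wt x ≤ n :=
  le_trans (Finset.card_filter_le _ _) (by simp)

lemma ite_sum_split (k l a b : ℕ) (ha : a ≤ l) :
    (if a + b = k then (1:ℂ) else 0)
      = ∑ w ∈ Finset.range (min k l + 1),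
          (if a = w then (1:ℂ) else 0) * (if b = k - w then (1:ℂ) else 0) := by
  by_cases h : a + b = k
  · rw [if_pos h, Finset.sum_eq_single_of_mem a (by simp [Finset.mem_range]; omega)]
    · simp [show b = k - a by omega]
    · intro w _ hwa
      rw [if_neg (Ne.symm hwa), zero_mul]
  · rw [if_neg h]
    symm
    apply Finset.sum_eq_zero
    intro w hw
    rw [Finset.mem_range] at hw
    by_cases h1 : a = w
    · rw [if_neg (show ¬ b = k - w by omega), mul_zero]
    · rw [if_neg h1, zero_mul]

lemma norm_sq_dot {I : Type*} [Fintype I] [DecidableEq I] (A : Matrix I I ℂ) (x : I → ℂ) :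
    star (A *ᵥ x) ⬝ᵥ (A *ᵥ x) = star x ⬝ᵥ ((Aᴴ * A) *ᵥ x) := by
  rw [Matrix.star_mulVec, ← Matrix.mulVec_mulVec]
  exact (Matrix.dotProduct_mulVec _ _ _).symm

lemma quad_congr {I : Type*} [Fintype I] [DecidableEq I] (A B P : Matrix I I ℂ)
    (hP : Pᴴ = P) (h : P * A * P = P * B * P) (φ : I → ℂ) :
    star (P *ᵥ φ) ⬝ᵥ (A *ᵥ (P *ᵥ φ)) = star (P *ᵥ φ) ⬝ᵥ (B *ᵥ (P *ᵥ φ)) := by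
  rw [Matrix.star_mulVec, hP, Matrix.mulVec_mulVec, Matrix.mulVec_mulVec,
    Matrix.dotProduct_mulVec, Matrix.dotProduct_mulVec, Matrix.vecMul_vecMul,
    Matrix.vecMul_vecMul, ← Matrix.mul_assoc, ← Matrix.mul_assoc, h]


/-- for a self-adjoint `O` with `0 ≤ O ≤ I` on `ℓ ≤ n` qubits,
`O^{(w)} = P^{(w)}_ℓ O P^{(w)}_ℓ` (positive semidefinite, with psd square root
`√(O^{(w)})`), and every vector `ψ` of weight `k`,
`‖ ∑_{w=0}^{min(k,ℓ)} (√(O^{(w)}) ⊗ P^{(k−w)}_{n−ℓ}) ψ ‖² = ⟨ψ, (O ⊗ I) ψ⟩`. -/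
theorem stmt_11 (n l k : ℕ) (hl : l ≤ n)
    (O : Matrix (Fin l → Bool) (Fin l → Bool) ℂ)
    (hO : O.PosSemidef)
    (hO1 : ((1 : Matrix (Fin l → Bool) (Fin l → Bool) ℂ) - O).PosSemidef)
    (hOw : ∀ w : ℕ, (Pk l w * O * Pk l w).PosSemidef)
    (ψ : (Fin n → Bool) → ℂ) (hψ : ψ ∈ Set.range (Pk n k).mulVec) :
    star (∑ w ∈ Finset.range (min k l + 1),
        (Matrix.reindex (splitEquivLe hl) (splitEquivLe hl)
          ((hOw w).sqrt ⊗ₖ Pk (n - l) (k - w))) *ᵥ ψ) ⬝ᵥ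
      (∑ w ∈ Finset.range (min k l + 1),
        (Matrix.reindex (splitEquivLe hl) (splitEquivLe hl)
          ((hOw w).sqrt ⊗ₖ Pk (n - l) (k - w))) *ᵥ ψ)
    = star ψ ⬝ᵥ ((Matrix.reindex (splitEquivLe hl) (splitEquivLe hl)
        (O ⊗ₖ (1 : Matrix (Fin (n - l) → Bool) (Fin (n - l) → Bool) ℂ))) *ᵥ ψ) := by
  classical
  obtain ⟨φ, rfl⟩ := hψ
  set e := splitEquivLe hl with he
  set W := Finset.range (min k l + 1) with hW
  -- basic facts
  have hmemk : ∀ a ∈ W, a ≤ k := by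
    intro a ha; rw [hW, Finset.mem_range] at ha; omega
  have hRort : ∀ a ∈ W, ∀ b ∈ W, a ≠ b →
      Pk (n - l) (k - a) * Pk (n - l) (k - b) = 0 := by
    intro a ha b hb hab
    rw [Pk_mul_Pk, if_neg]
    intro h
    exact hab (by have := hmemk a ha; have := hmemk b hb; omega)
  have hRsq : ∀ a, Pk (n - l) (k - a) * Pk (n - l) (k - a) = Pk (n - l) (k - a) := by
    intro a; rw [Pk_mul_Pk, if_pos rfl]
  have hPsq : ∀ a, Pk l a * Pk l a = Pk l a := by
    intro a; rw [Pk_mul_Pk, if_pos rfl]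
  -- Q : the weight-k projector in product coordinates
  set Q : Matrix ((Fin l → Bool) × (Fin (n - l) → Bool))
      ((Fin l → Bool) × (Fin (n - l) → Bool)) ℂ :=
    ∑ w ∈ W, Pk l w ⊗ₖ Pk (n - l) (k - w) with hQ
  have hPQ' : (Matrix.reindex e.symm e.symm (Pk n k)) = Q := by
    ext ⟨x, y⟩ ⟨x', y'⟩
    rw [hQ]
    simp only [Matrix.reindex_apply, Matrix.submatrix_apply, Equiv.symm_symm,
      Matrix.sum_apply, Matrix.kroneckerMap_apply]
    by_cases hxy : (x, y) = (x', y')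
    · rw [Prod.mk.injEq] at hxy
      obtain ⟨rfl, rfl⟩ := hxy
      rw [show (Pk n k) (e (x, y)) (e (x, y)) = if wt (e (x, y)) = k then 1 else 0 from
        Matrix.diagonal_apply_eq _ _]
      rw [he, wt_splitEquivLe hl x y]
      rw [ite_sum_split k l (wt x) (wt y) (wt_le x)]
      apply Finset.sum_congr rfl
      intro w _
      rw [show (Pk l w) x x = if wt x = w then 1 else 0 from Matrix.diagonal_apply_eq _ _,
        show (Pk (n - l) (k - w)) y y = if wt y = k - w then 1 else 0 from
          Matrix.diagonal_apply_eq _ _]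
    · rw [show (Pk n k) (e (x, y)) (e (x', y')) = 0 from
        Matrix.diagonal_apply_ne _ (e.injective.ne hxy)]
      symm
      apply Finset.sum_eq_zero
      intro w _
      rw [Prod.mk.injEq] at hxy
      by_cases hx : x = x'
      · have hy : y ≠ y' := fun hy => hxy ⟨hx, hy⟩
        rw [show (Pk (n - l) (k - w)) y y' = 0 from Matrix.diagonal_apply_ne _ hy, mul_zero]
      · rw [show (Pk l w) x x' = 0 from Matrix.diagonal_apply_ne _ hx, zero_mul]
  have hPQ : Pk n k = Matrix.reindex e e Q := by
    rw [← hPQ', ← Matrix.reindex_symm, Equiv.apply_symm_apply]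
  -- G : the sum of kronecker products in product coordinates
  set G : Matrix ((Fin l → Bool) × (Fin (n - l) → Bool))
      ((Fin l → Bool) × (Fin (n - l) → Bool)) ℂ :=
    ∑ w ∈ W, (hOw w).sqrt ⊗ₖ Pk (n - l) (k - w) with hG
  have hT : (∑ w ∈ W, Matrix.reindex e e ((hOw w).sqrt ⊗ₖ Pk (n - l) (k - w)))
      = Matrix.reindex e e G := by
    rw [hG]
    ext p p'
    simp [Matrix.reindex_apply, Matrix.submatrix_apply, Matrix.sum_apply]
  -- collapse lemmas
  have colL : ∀ f : ℕ → Matrix (Fin l → Bool) (Fin l → Bool) ℂ,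
      Q * (∑ a ∈ W, f a ⊗ₖ Pk (n - l) (k - a))
        = ∑ a ∈ W, (Pk l a * f a) ⊗ₖ Pk (n - l) (k - a) := by
    intro f
    rw [hQ, Finset.sum_mul_sum]
    apply Finset.sum_congr rfl
    intro b hb
    rw [Finset.sum_eq_single_of_mem b hb]
    · rw [← Matrix.mul_kronecker_mul, hRsq b]
    · intro a ha hab
      rw [← Matrix.mul_kronecker_mul, hRort b hb a ha (Ne.symm hab), Matrix.kronecker_zero]
  have colR : ∀ f : ℕ → Matrix (Fin l → Bool) (Fin l → Bool) ℂ,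
      (∑ a ∈ W, f a ⊗ₖ Pk (n - l) (k - a)) * Q
        = ∑ a ∈ W, (f a * Pk l a) ⊗ₖ Pk (n - l) (k - a) := by
    intro f
    rw [hQ, Finset.sum_mul_sum]
    apply Finset.sum_congr rfl
    intro b hb
    rw [Finset.sum_eq_single_of_mem b hb]
    · rw [← Matrix.mul_kronecker_mul, hRsq b]
    · intro a ha hab
      rw [← Matrix.mul_kronecker_mul, hRort b hb a ha (Ne.symm hab), Matrix.kronecker_zero]
  -- G is Hermitian
  have hGH : Gᴴ = G := by
    rw [hG, Matrix.conjTranspose_sum]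
    apply Finset.sum_congr rfl
    intro w _
    rw [kron_conjT, psd_sqrt_isHermitian (hOw w), Pk_herm]
  -- G * G
  have hGG : G * G = ∑ w ∈ W, (Pk l w * O * Pk l w) ⊗ₖ Pk (n - l) (k - w) := by
    rw [hG, Finset.sum_mul_sum]
    apply Finset.sum_congr rfl
    intro b hb
    rw [Finset.sum_eq_single_of_mem b hb]
    · rw [← Matrix.mul_kronecker_mul, hRsq b, psd_sqrt_mul_self (hOw b)]
    · intro a ha hab
      rw [← Matrix.mul_kronecker_mul, hRort b hb a ha (Ne.symm hab), Matrix.kronecker_zero]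
  -- core identity
  have core : Q * (Gᴴ * G) * Q = Q * (O ⊗ₖ (1 : Matrix (Fin (n - l) → Bool) (Fin (n - l) → Bool) ℂ)) * Q := by
    have hQO : Q * (O ⊗ₖ (1 : Matrix (Fin (n - l) → Bool) (Fin (n - l) → Bool) ℂ))
        = ∑ b ∈ W, (Pk l b * O) ⊗ₖ Pk (n - l) (k - b) := by
      rw [hQ, Finset.sum_mul]
      apply Finset.sum_congr rfl
      intro b _
      rw [← Matrix.mul_kronecker_mul, mul_one]
    rw [hGH, hGG, colL, colR, hQO, colR]
    apply Finset.sum_congr rfl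
    intro a _
    have : Pk l a * (Pk l a * O * Pk l a) * Pk l a = Pk l a * O * Pk l a := by
      calc Pk l a * (Pk l a * O * Pk l a) * Pk l a
          = (Pk l a * Pk l a) * O * (Pk l a * Pk l a) := by noncomm_ring
        _ = Pk l a * O * Pk l a := by rw [hPsq]
    rw [this]
  -- put everything together
  rw [← sum_mulVec', hT, norm_sq_dot]
  apply quad_congr _ _ _ (Pk_herm n k)
  rw [reindex_conjT, reindex_mul, hPQ, reindex_mul, reindex_mul, reindex_mul, reindex_mul]
  exact congrArg _ core
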